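/- Let π be a continuous piecewise linear minimal valid function, and let π' be a minimal valid function with E(π) ⊆ E(π'). Then π' is Lipschitz continuous on ℝ. -/

import Mathlib

/-- A finite-support function `y : ℝ → ℕ` is feasible if `∑ r, r·y(r) − f ∈ ℤ`. -/
def Feasible (f : ℝ) (y : ℝ →₀ ℕ) : Prop :=
  ∃ z : ℤ, (∑ r ∈ y.support, r * (y r : ℝ)) - f = (z : ℝ)

/-- `π` is a valid function: nonnegative, and `∑ r, π(r)·y(r) ≥ 1` for every feasible `y`. -/
def Valid (f : ℝ) (π : ℝ → ℝ) : Prop :=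
  (∀ x, 0 ≤ π x) ∧
    ∀ y : ℝ →₀ ℕ, Feasible f y → 1 ≤ ∑ r ∈ y.support, π r * (y r : ℝ)

/-- A valid function is minimal if no other valid function is pointwise ≤ it. -/
def MinimalValid (f : ℝ) (π : ℝ → ℝ) : Prop :=
  Valid f π ∧ ¬ ∃ π' : ℝ → ℝ, Valid f π' ∧ (∀ x, π' x ≤ π x) ∧ π' ≠ π

/-- `P(π)`: the set of feasible `y` with `∑ r, π(r)·y(r) = 1`. -/
def Pset (f : ℝ) (π : ℝ → ℝ) : Set (ℝ →₀ ℕ) :=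
  {y | Feasible f y ∧ ∑ r ∈ y.support, π r * (y r : ℝ) = 1}

/-- `E(π) = {(x,y) : π(x) + π(y) = π(x+y)}`. -/
def Eset (π : ℝ → ℝ) : Set (ℝ × ℝ) :=
  {p | π p.1 + π p.2 = π (p.1 + p.2)}

/-- A valid function `π` is a facet if every valid `π'` with `P(π) ⊆ P(π')` equals `π`. -/
def IsFacet (f : ℝ) (π : ℝ → ℝ) : Prop :=
  Valid f π ∧ ∀ π' : ℝ → ℝ, Valid f π' → Pset f π ⊆ Pset f π' → π' = π

/-- A valid function `π` is a weak facet if every valid `π'` with `P(π) ⊆ P(π')`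
has `P(π) = P(π')`. -/
def IsWeakFacet (f : ℝ) (π : ℝ → ℝ) : Prop :=
  Valid f π ∧ ∀ π' : ℝ → ℝ, Valid f π' → Pset f π ⊆ Pset f π' → Pset f π = Pset f π'

/-- A valid function `π` is extreme if whenever `π = (π¹ + π²)/2` with `π¹, π²` valid,
then `π¹ = π² = π`. -/
def ExtremeFunc (f : ℝ) (π : ℝ → ℝ) : Prop :=
  Valid f π ∧ ∀ π₁ π₂ : ℝ → ℝ, Valid f π₁ → Valid f π₂ →
    (∀ x, π x = (π₁ x + π₂ x) / 2) → π₁ = π ∧ π₂ = π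

/-- `π` is piecewise linear: there is a closed, discrete set `B ⊆ ℝ` of breakpoints
such that `π` is affine on each connected component of `ℝ \ B`. -/
def PiecewiseLinear (π : ℝ → ℝ) : Prop :=
  ∃ B : Set ℝ, IsClosed B ∧
    (∀ x ∈ B, ∃ ε > (0 : ℝ), ∀ y ∈ B, |y - x| < ε → y = x) ∧
    (∀ x ∉ B, ∃ a b : ℝ, ∀ z ∈ connectedComponentIn Bᶜ x, π z = a * z + b)

/-- `π` is continuous piecewise linear. -/
def ContPiecewiseLinear (π : ℝ → ℝ) : Prop :=
  PiecewiseLinear π ∧ Continuous π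

noncomputable def Wsum (φ : ℝ → ℝ) (y : ℝ →₀ ℕ) : ℝ := ∑ r ∈ y.support, φ r * (y r : ℝ)

lemma Wsum_eq (φ : ℝ → ℝ) (y : ℝ →₀ ℕ) : Wsum φ y = y.sum (fun r n => φ r * (n : ℝ)) := rfl

lemma Wsum_add (φ : ℝ → ℝ) (y₁ y₂ : ℝ →₀ ℕ) : Wsum φ (y₁ + y₂) = Wsum φ y₁ + Wsum φ y₂ := by
  simp only [Wsum_eq]
  exact Finsupp.sum_add_index' (fun a => by simp) (fun a b₁ b₂ => by push_cast; ring)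

lemma Wsum_single (φ : ℝ → ℝ) (a : ℝ) (m : ℕ) : Wsum φ (Finsupp.single a m) = φ a * m := by
  simp only [Wsum_eq]
  exact Finsupp.sum_single_index (by simp)

lemma Wsum_erase (φ : ℝ → ℝ) (y : ℝ →₀ ℕ) (c : ℝ) :
    Wsum φ (y.erase c) + φ c * (y c : ℝ) = Wsum φ y := by
  conv_rhs => rw [← Finsupp.erase_add_single c y]
  rw [Wsum_add, Wsum_single]

lemma Wsum_congr {φ ψ : ℝ → ℝ} (y : ℝ →₀ ℕ) (h : ∀ r ∈ y.support, φ r = ψ r) :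
    Wsum φ y = Wsum ψ y :=
  Finset.sum_congr rfl (fun r hr => by rw [h r hr])

lemma feasible_iff (f : ℝ) (y : ℝ →₀ ℕ) : Feasible f y ↔ ∃ z : ℤ, Wsum (fun r => r) y - f = z :=
  Iff.rfl

lemma valid_sum {f : ℝ} {π : ℝ → ℝ} (h : Valid f π) {y : ℝ →₀ ℕ} (hy : Feasible f y) :
    1 ≤ Wsum π y := h.2 y hy
lemma minimal_zero {f : ℝ} {π : ℝ → ℝ} (hπ : MinimalValid f π) : π 0 = 0 := by
  by_contra h0
  have hpos : 0 < π 0 := lt_of_le_of_ne (hπ.1.1 0) (Ne.symm h0)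
  set π₁ : ℝ → ℝ := Function.update π 0 0 with hπ₁
  have hval : Valid f π₁ := by
    constructor
    · intro x
      by_cases hx : x = 0
      · simp [hπ₁, hx]
      · simp only [hπ₁, Function.update_of_ne hx]; exact hπ.1.1 x
    · intro y hy
      have hfe : Feasible f (y.erase 0) := by
        obtain ⟨z, hz⟩ := hy
        refine ⟨z, ?_⟩
        have h1 := Wsum_erase (fun r => r) y 0
        simp only [zero_mul, add_zero] at h1
        show Wsum (fun r => r) (y.erase 0) - f = (z:ℝ)
        rw [h1]; exact hz
      have h1 : (1:ℝ) ≤ Wsum π (y.erase 0) := hπ.1.2 _ hfe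
      have h2 : Wsum π₁ (y.erase 0) = Wsum π (y.erase 0) := by
        refine Wsum_congr _ (fun r hr => ?_)
        have hr0 : r ≠ 0 := by
          have := Finsupp.support_erase (a := (0:ℝ)) (f := y) ▸ hr
          exact Finset.ne_of_mem_erase this
        simp [hπ₁, Function.update_of_ne hr0]
      have h3 : Wsum π₁ y = Wsum π₁ (y.erase 0) + π₁ 0 * (y 0 : ℝ) := (Wsum_erase π₁ y 0).symm
      have h4 : π₁ 0 = 0 := by simp [hπ₁]
      show (1:ℝ) ≤ Wsum π₁ y
      rw [h3, h2, h4]; linarith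
  exact hπ.2 ⟨π₁, hval, fun x => by
    by_cases hx : x = 0
    · rw [hπ₁, hx]; simp; exact le_of_lt hpos
    · rw [hπ₁, Function.update_of_ne hx],
    fun heq => h0 (by rw [← heq]; simp [hπ₁])⟩

lemma minimal_subadd {f : ℝ} {π : ℝ → ℝ} (hπ : MinimalValid f π) :
    ∀ a b : ℝ, π (a + b) ≤ π a + π b := by
  have hz := minimal_zero hπ
  intro a b
  by_contra hlt
  push_neg at hlt
  have ha : a ≠ 0 := by rintro rfl; simp [hz] at hlt
  have hb : b ≠ 0 := by rintro rfl; simp [hz] at hlt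
  set c := a + b with hc
  have hca : c ≠ a := fun h => hb (by linarith [h ▸ hc])
  have hcb : c ≠ b := fun h => ha (by linarith [h ▸ hc])
  set π₁ : ℝ → ℝ := Function.update π c (π a + π b) with hπ₁
  have hval : Valid f π₁ := by
    constructor
    · intro x
      by_cases hx : x = c
      · simp only [hπ₁, hx, Function.update_self]
        exact add_nonneg (hπ.1.1 a) (hπ.1.1 b)
      · simp only [hπ₁, Function.update_of_ne hx]; exact hπ.1.1 x
    · intro y hy
      set m : ℕ := y c with hm
      set y' : ℝ →₀ ℕ := y.erase c + Finsupp.single a m + Finsupp.single b m with hy'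
      have hWid : ∀ φ : ℝ → ℝ, Wsum φ y' = Wsum φ (y.erase c) + φ a * m + φ b * m := by
        intro φ
        rw [hy', Wsum_add, Wsum_add, Wsum_single, Wsum_single]
      have hfe : Feasible f y' := by
        obtain ⟨z, hzz⟩ := hy
        refine ⟨z, ?_⟩
        have h1 := Wsum_erase (fun r => r) y c
        have h2 := hWid (fun r => r)
        have hzz' : Wsum (fun r => r) y - f = (z:ℝ) := hzz
        have heq : Wsum (fun r => r) y' = Wsum (fun r => r) y := by
          rw [h2, ← h1, hc]; ring
        show Wsum (fun r => r) y' - f = (z:ℝ)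
        rw [heq]; exact hzz'
      have h1 : (1:ℝ) ≤ Wsum π y' := hπ.1.2 _ hfe
      have h2 : Wsum π₁ (y.erase c) = Wsum π (y.erase c) := by
        refine Wsum_congr _ (fun r hr => ?_)
        have hrc : r ≠ c := by
          have := Finsupp.support_erase (a := c) (f := y) ▸ hr
          exact Finset.ne_of_mem_erase this
        simp [hπ₁, Function.update_of_ne hrc]
      have h3 := Wsum_erase π₁ y c
      have h4 : π₁ c = π a + π b := by simp [hπ₁]
      have h5 := hWid π
      show (1:ℝ) ≤ Wsum π₁ y
      rw [← h3, h2, h4]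
      rw [h5] at h1
      linarith
  refine hπ.2 ⟨π₁, hval, fun x => ?_, fun heq => ?_⟩
  · by_cases hx : x = c
    · rw [hπ₁, hx]; simp only [Function.update_self]; exact le_of_lt hlt
    · rw [hπ₁, Function.update_of_ne hx]
  · have h6 : π₁ c = π c := by rw [heq]
    rw [hπ₁] at h6
    simp only [Function.update_self] at h6
    linarith
lemma tendsto_aux (ε : ℝ) (hε : 0 < ε) :
    Filter.Tendsto (fun n : ℕ => ε / ((n : ℝ) + 2)) Filter.atTop (nhds 0) := by
  apply Filter.Tendsto.div_atTop (tendsto_const_nhds)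
  exact Filter.tendsto_atTop_add_const_right _ 2 tendsto_natCast_atTop_atTop

lemma limit_piece {π : ℝ → ℝ} (hcont : Continuous π) (hz : π 0 = 0)
    {ε a b : ℝ} (hε : 0 < ε) (haff : ∀ z ∈ Set.Ioo (0:ℝ) ε, π z = a * z + b) : b = 0 := by
  have hmem : ∀ n : ℕ, ε / ((n:ℝ) + 2) ∈ Set.Ioo (0:ℝ) ε := by
    intro n
    constructor
    · positivity
    · apply div_lt_self hε; have := Nat.cast_nonneg (α := ℝ) n; linarith
  have h1 : Filter.Tendsto (fun n : ℕ => π (ε / ((n:ℝ) + 2))) Filter.atTop (nhds 0) := by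
    have := (hcont.tendsto 0).comp (tendsto_aux ε hε)
    simpa [hz, Function.comp_def] using this
  have h2 : Filter.Tendsto (fun n : ℕ => π (ε / ((n:ℝ) + 2))) Filter.atTop (nhds b) := by
    have heq : (fun n : ℕ => π (ε / ((n:ℝ) + 2))) = fun n : ℕ => a * (ε / ((n:ℝ) + 2)) + b := by
      funext n; exact haff _ (hmem n)
    rw [heq]
    have : Filter.Tendsto (fun n : ℕ => a * (ε / ((n:ℝ) + 2)) + b) Filter.atTop
        (nhds (a * 0 + b)) := by
      exact (Filter.Tendsto.const_mul a (tendsto_aux ε hε)).add_const b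
    simpa using this
  have := tendsto_nhds_unique h1 h2
  linarith

lemma limit_piece_neg {π : ℝ → ℝ} (hcont : Continuous π) (hz : π 0 = 0)
    {ε a b : ℝ} (hε : 0 < ε) (haff : ∀ z ∈ Set.Ioo (-ε) (0:ℝ), π z = a * z + b) : b = 0 := by
  have := limit_piece (π := fun x => π (-x)) (hcont.comp continuous_neg) (by simpa using hz)
      (a := -a) (b := b) hε ?_
  · exact this
  · intro z hz'
    have : -z ∈ Set.Ioo (-ε) (0:ℝ) := by constructor <;> [linarith [hz'.2]; linarith [hz'.1]]
    have := haff _ this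
    rw [this]; ring

lemma near_zero {π : ℝ → ℝ} (hcpl : ContPiecewiseLinear π) (h0 : π 0 = 0) :
    ∃ ε > (0:ℝ), ∃ a₁ a₂ : ℝ,
      (∀ z, 0 ≤ z → z < ε → π z = a₁ * z) ∧ (∀ z, -ε < z → z ≤ 0 → π z = a₂ * z) := by
  obtain ⟨⟨B, hBcl, hBdisc, hBaff⟩, hcont⟩ := hcpl
  by_cases h0B : (0:ℝ) ∈ B
  · -- 0 is an isolated breakpoint
    obtain ⟨ε, hε, hiso⟩ := hBdisc 0 h0B
    have hIooPos : Set.Ioo (0:ℝ) ε ⊆ Bᶜ := by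
      intro z hz hzB
      have : z = 0 := hiso z hzB (by rw [sub_zero, abs_of_pos hz.1]; exact hz.2)
      linarith [hz.1]
    have hIooNeg : Set.Ioo (-ε) (0:ℝ) ⊆ Bᶜ := by
      intro z hz hzB
      have : z = 0 := hiso z hzB (by rw [sub_zero, abs_of_neg hz.2]; linarith [hz.1])
      linarith [hz.2]
    -- positive side
    have hx₀ : ε / 2 ∈ Set.Ioo (0:ℝ) ε := ⟨by positivity, by linarith⟩
    have hx₀B : ε / 2 ∉ B := hIooPos hx₀
    obtain ⟨a, b, hab⟩ := hBaff _ hx₀B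
    have hsub : Set.Ioo (0:ℝ) ε ⊆ connectedComponentIn Bᶜ (ε/2) :=
      isPreconnected_Ioo.subset_connectedComponentIn hx₀ hIooPos
    have haffP : ∀ z ∈ Set.Ioo (0:ℝ) ε, π z = a * z + b := fun z hzz => hab z (hsub hzz)
    have hb : b = 0 := limit_piece hcont h0 hε haffP
    -- negative side
    have hx₁ : -(ε / 2) ∈ Set.Ioo (-ε) (0:ℝ) := ⟨by linarith, by linarith⟩
    have hx₁B : -(ε / 2) ∉ B := hIooNeg hx₁
    obtain ⟨a', b', hab'⟩ := hBaff _ hx₁B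
    have hsub' : Set.Ioo (-ε) (0:ℝ) ⊆ connectedComponentIn Bᶜ (-(ε/2)) :=
      isPreconnected_Ioo.subset_connectedComponentIn hx₁ hIooNeg
    have haffN : ∀ z ∈ Set.Ioo (-ε) (0:ℝ), π z = a' * z + b' := fun z hzz => hab' z (hsub' hzz)
    have hb' : b' = 0 := limit_piece_neg hcont h0 hε haffN
    refine ⟨ε, hε, a, a', fun z hz1 hz2 => ?_, fun z hz1 hz2 => ?_⟩
    · rcases eq_or_lt_of_le hz1 with h | h
      · rw [← h, h0]; ring
      · rw [haffP z ⟨h, hz2⟩, hb]; ring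
    · rcases eq_or_lt_of_le hz2 with h | h
      · rw [h, h0]; ring
      · rw [haffN z ⟨hz1, h⟩, hb']; ring
  · -- 0 is not a breakpoint
    have hopen : IsOpen Bᶜ := hBcl.isOpen_compl
    obtain ⟨ε, hε, hball⟩ := Metric.isOpen_iff.mp hopen 0 h0B
    have hIoo : Set.Ioo (-ε) ε ⊆ Bᶜ := by
      intro z hz
      apply hball
      rw [Metric.mem_ball, Real.dist_eq, sub_zero, abs_lt]
      exact ⟨hz.1, hz.2⟩
    obtain ⟨a, b, hab⟩ := hBaff 0 h0B
    have hsub : Set.Ioo (-ε) ε ⊆ connectedComponentIn Bᶜ 0 :=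
      isPreconnected_Ioo.subset_connectedComponentIn ⟨by linarith, hε⟩ hIoo
    have hb : b = 0 := by
      have := hab 0 (mem_connectedComponentIn h0B)
      rw [h0] at this; linarith
    refine ⟨ε, hε, a, a, fun z hz1 hz2 => ?_, fun z hz1 hz2 => ?_⟩
    · rw [hab z (hsub ⟨by linarith, hz2⟩), hb]; ring
    · rw [hab z (hsub ⟨hz1, by linarith⟩), hb]; ring
lemma growth_lemma {g : ℝ → ℝ} {δ : ℝ} (hδ : 0 < δ) (hgnn : ∀ x, 0 ≤ g x)
    (hadd : ∀ x y : ℝ, 0 ≤ x → 0 ≤ y → x + y ≤ δ → g (x + y) = g x + g y) :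
    ∀ x, 0 ≤ x → x ≤ δ → g x ≤ (2 * g δ / δ) * x := by
  have hg0 : g 0 = 0 := by
    have := hadd 0 0 le_rfl le_rfl (by linarith)
    simpa using this
  have hdouble : ∀ k : ℕ, ∀ x : ℝ, 0 ≤ x → 2 ^ k * x ≤ δ → g (2 ^ k * x) = 2 ^ k * g x := by
    intro k
    induction k with
    | zero => intro x _ _; norm_num
    | succ k ih =>
      intro x hx hle
      have hxk : (0:ℝ) ≤ 2 ^ k * x := by positivity
      have hle' : 2 ^ k * x ≤ δ := by
        have he : (2:ℝ) ^ (k+1) * x = 2 ^ k * x + 2 ^ k * x := by ring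
        linarith
      have h1 : (2:ℝ) ^ (k+1) * x = 2 ^ k * x + 2 ^ k * x := by ring
      rw [h1, hadd _ _ hxk hxk (by rw [← h1]; exact hle), ih x hx hle']
      ring
  have hmono : ∀ u v : ℝ, 0 ≤ u → u ≤ v → v ≤ δ → g u ≤ g v := by
    intro u v hu huv hv
    have := hadd u (v - u) hu (by linarith) (by linarith)
    have hnn := hgnn (v - u)
    rw [show u + (v - u) = v by ring] at this
    linarith
  intro x hx hxδ
  rcases eq_or_lt_of_le hx with h | hxpos
  · rw [← h, hg0]; simp
  have hgδ : 0 ≤ g δ := hgnn δ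
  -- find k with 2^k * x ≤ δ < 2^(k+1) * x
  obtain ⟨n, hn⟩ := pow_unbounded_of_one_lt (δ / x) (by norm_num : (1:ℝ) < 2)
  have hex : ∃ n : ℕ, δ < 2 ^ n * x := ⟨n, by rw [div_lt_iff₀ hxpos] at hn; linarith⟩
  set n₀ := Nat.find hex with hn₀
  have hn₀pos : n₀ ≠ 0 := by
    intro h
    have := Nat.find_spec hex
    rw [← hn₀, h] at this
    simp at this
    linarith
  obtain ⟨k, hk⟩ := Nat.exists_eq_succ_of_ne_zero hn₀pos
  have hkle : 2 ^ k * x ≤ δ := by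
    have := Nat.find_min hex (m := k) (by omega)
    push_neg at this
    exact this
  have hkgt : δ < 2 ^ (k+1) * x := by
    have := Nat.find_spec hex
    rwa [← hn₀, hk] at this
  have hdd := hdouble k x hx hkle
  have h2 : 2 ^ k * g x ≤ g δ := by
    rw [← hdd]
    exact hmono _ _ (by positivity) hkle le_rfl
  have hpk : (0:ℝ) < 2 ^ k := by positivity
  have h5 : δ ≤ 2 * 2 ^ k * x := by
    have he : (2:ℝ) ^ (k+1) * x = 2 * 2 ^ k * x := by ring
    linarith
  rw [div_mul_eq_mul_div, le_div_iff₀ hδ]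
  nlinarith [mul_le_mul_of_nonneg_left h5 (hgnn x),
    mul_le_mul_of_nonneg_left h2 (by positivity : (0:ℝ) ≤ 2 * x)]

lemma lipschitz_of_local {φ : ℝ → ℝ} {δ C : ℝ} (hδ : 0 < δ) (hC : 0 ≤ C)
    (hsub : ∀ a b : ℝ, φ (a + b) ≤ φ a + φ b)
    (hb : ∀ h : ℝ, 0 ≤ h → h ≤ δ → φ h ≤ C * h ∧ φ (-h) ≤ C * h) :
    ∀ x y : ℝ, |φ x - φ y| ≤ C * |x - y| := by
  have local_step : ∀ x y : ℝ, x ≤ y → y - x ≤ δ → |φ x - φ y| ≤ C * (y - x) := by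
    intro x y hxy hle
    have h1 : φ y ≤ φ x + C * (y - x) := by
      have := hsub x (y - x)
      rw [show x + (y - x) = y by ring] at this
      have := (hb (y - x) (by linarith) hle).1
      linarith
    have h2 : φ x ≤ φ y + C * (y - x) := by
      have h3 := hsub y (x - y)
      rw [show y + (x - y) = x by ring] at h3
      have h4 := (hb (y - x) (by linarith) hle).2
      rw [show -(y - x) = x - y by ring] at h4
      linarith
    rw [abs_le]
    constructor <;> linarith
  have step_n : ∀ n : ℕ, ∀ x y : ℝ, x ≤ y → y - x ≤ n * δ → |φ x - φ y| ≤ C * (y - x) := by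
    intro n
    induction n with
    | zero =>
      intro x y hxy hle
      simp only [Nat.cast_zero, zero_mul] at hle
      have : x = y := le_antisymm hxy (by linarith)
      rw [this]; simp
    | succ n ih =>
      intro x y hxy hle
      by_cases hcase : y - x ≤ δ
      · exact local_step x y hxy hcase
      · push_neg at hcase
        set z := y - δ with hz
        have h1 : |φ z - φ y| ≤ C * (y - z) := local_step z y (by linarith) (by rw [hz]; ring_nf; linarith)
        have h2 : |φ x - φ z| ≤ C * (z - x) := by
          apply ih x z (by linarith)
          push_cast at hle ⊢
          linarith
        calc |φ x - φ y| ≤ |φ x - φ z| + |φ z - φ y| := abs_sub_le _ _ _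
          _ ≤ C * (z - x) + C * (y - z) := add_le_add h2 h1
          _ = C * (y - x) := by ring
  intro x y
  rcases le_total x y with h | h
  · obtain ⟨n, hn⟩ := exists_nat_ge ((y - x) / δ)
    have : y - x ≤ n * δ := by
      rw [div_le_iff₀ hδ] at hn
      linarith
    have hst := step_n n x y h this
    have hab : |x - y| = y - x := by rw [abs_of_nonpos (by linarith), neg_sub]
    rw [hab]; exact hst
  · obtain ⟨n, hn⟩ := exists_nat_ge ((x - y) / δ)
    have h1 : x - y ≤ n * δ := by
      rw [div_le_iff₀ hδ] at hn
      linarith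
    have hst := step_n n y x h h1
    rw [abs_sub_comm] at hst
    have hab : |x - y| = x - y := abs_of_nonneg (by linarith)
    rw [hab]; exact hst
theorem stmt14 (f : ℝ) (hf : f ∈ Set.Ioo (0 : ℝ) 1) (π : ℝ → ℝ)
    (hπ : MinimalValid f π) (hcpl : ContPiecewiseLinear π)
    (π' : ℝ → ℝ) (hπ' : MinimalValid f π') (hE : Eset π ⊆ Eset π') :
    ∃ L : ℝ, 0 ≤ L ∧ ∀ x y : ℝ, |π' x - π' y| ≤ L * |x - y| := by
  have hz : π 0 = 0 := minimal_zero hπ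
  have hsub' : ∀ a b : ℝ, π' (a + b) ≤ π' a + π' b := minimal_subadd hπ'
  have hnn' : ∀ x, 0 ≤ π' x := hπ'.1.1
  obtain ⟨ε, hε, a₁, a₂, hP, hN⟩ := near_zero hcpl hz
  set δ := ε / 3 with hδdef
  have hδ : 0 < δ := by positivity
  -- additivity of π' on [0, δ]
  have haddP : ∀ x y : ℝ, 0 ≤ x → 0 ≤ y → x + y ≤ δ → π' (x + y) = π' x + π' y := by
    intro x y hx hy hxy
    have hxδ : x < ε := by linarith [hy]
    have hyδ : y < ε := by linarith [hx]
    have hsδ : x + y < ε := by linarith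
    have hmem : (x, y) ∈ Eset π := by
      show π x + π y = π (x + y)
      rw [hP x hx hxδ, hP y hy hyδ, hP (x + y) (by linarith) hsδ]; ring
    exact (hE hmem).symm
  -- additivity of π' on [-δ, 0]
  have haddN : ∀ x y : ℝ, 0 ≤ x → 0 ≤ y → x + y ≤ δ → π' (-(x + y)) = π' (-x) + π' (-y) := by
    intro x y hx hy hxy
    have hxδ : -ε < -x := by linarith [hy]
    have hyδ : -ε < -y := by linarith [hx]
    have hsδ : -ε < -(x + y) := by linarith
    have hmem : (-x, -y) ∈ Eset π := by
      show π (-x) + π (-y) = π (-x + -y)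
      rw [hN (-x) hxδ (by linarith), hN (-y) hyδ (by linarith),
        show -x + -y = -(x+y) by ring, hN (-(x+y)) hsδ (by linarith)]
      ring
    have h7 : π' (-x) + π' (-y) = π' (-x + -y) := hE hmem
    rw [show -x + -y = -(x+y) by ring] at h7
    exact h7.symm
  -- growth bounds
  have hg1 := growth_lemma hδ hnn' haddP
  have hg2 := growth_lemma (g := fun t => π' (-t)) hδ (fun x => hnn' (-x))
    (fun x y hx hy hxy => haddN x y hx hy hxy)
  set C₁ := 2 * π' δ / δ with hC₁
  set C₂ := 2 * π' (-δ) / δ with hC₂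
  set C := max C₁ C₂ with hC
  have hC₁nn : 0 ≤ C₁ := by
    rw [hC₁]; exact div_nonneg (by linarith [hnn' δ]) hδ.le
  have hCnn : 0 ≤ C := le_trans hC₁nn (le_max_left _ _)
  refine ⟨C, hCnn, ?_⟩
  apply lipschitz_of_local hδ hCnn hsub'
  intro h hh hhδ
  constructor
  · calc π' h ≤ C₁ * h := hg1 h hh hhδ
      _ ≤ C * h := mul_le_mul_of_nonneg_right (le_max_left _ _) hh
  · calc π' (-h) ≤ C₂ * h := hg2 h hh hhδ
      _ ≤ C * h := mul_le_mul_of_nonneg_right (le_max_right _ _) hh
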